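/- Let p ≥ 7 be prime, let λ ∈ ℂ be nonzero, and let M = (M_{ij}) ∈ GL₄(ℂ) and α ∈ ℂ* satisfy f_λ(M·x) = α·f_λ(x) as polynomials. If moreover M·e₃ = e₃ and M⟨e₄⟩ = ⟨e₄⟩, then M₃₁ = M₄₁ = M₃₂ = M₄₂ = 0; in particular M maps the plane {x₃ = x₄ = 0} to itself. -/

import Mathlib

open MvPolynomial Matrix

noncomputable def fpol (p : ℕ) (lam : ℂ) : MvPolynomial (Fin 4) ℂ :=
  X 0 ^ p + X 1 ^ p + X 2 ^ p + X 3 ^ p +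
    C lam * (X 0 ^ 2 * X 1 ^ (p - 4) * X 2 ^ 2 + X 0 ^ 4 * X 1 ^ (p - 6) * X 3 ^ 2)

noncomputable def substM (M : Matrix (Fin 4) (Fin 4) ℂ) (f : MvPolynomial (Fin 4) ℂ) :
    MvPolynomial (Fin 4) ℂ :=
  aeval (fun i => ∑ j, C (M i j) * X j) f

/-- The standard basis vectors of `ℂ⁴`. -/
noncomputable def stdBasis (i : Fin 4) : Fin 4 → ℂ := Pi.single i 1

/-- The coordinate line `⟨eᵢ⟩ = ℂ·eᵢ ⊆ ℂ⁴`. -/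
noncomputable def line (i : Fin 4) : Submodule ℂ (Fin 4 → ℂ) :=
  Submodule.span ℂ {stdBasis i}

/-- The plane `{x₃ = x₄ = 0}`, i.e. the span of `e₁` and `e₂`. -/
noncomputable def plane12 : Submodule ℂ (Fin 4 → ℂ) :=
  Submodule.span ℂ {stdBasis 0, stdBasis 1}

theorem aux_L1 (u w : ℂ) (n : ℕ) :
    ((Polynomial.C u * Polynomial.X + Polynomial.C w)^n).coeff 1 = n * u * w^(n-1) := by
  rw [add_pow, Polynomial.finset_sum_coeff]
  have : ∀ k ∈ Finset.range (n+1),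
      ((Polynomial.C u * Polynomial.X) ^ k * Polynomial.C w ^ (n - k)
        * (n.choose k : Polynomial ℂ)).coeff 1
      = if k = 1 then (n:ℂ) * u * w^(n-1) else 0 := by
    intro k hk
    have : (Polynomial.C u * Polynomial.X) ^ k * Polynomial.C w ^ (n - k)
          * (n.choose k : Polynomial ℂ)
        = Polynomial.C (u^k * w^(n-k) * (n.choose k : ℂ)) * Polynomial.X ^ k := by
      push_cast [← Polynomial.C_eq_natCast]
      rw [mul_pow, ← Polynomial.C_pow, ← Polynomial.C_pow, Polynomial.C_mul, Polynomial.C_mul]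
      ring
    rw [this, Polynomial.coeff_C_mul, Polynomial.coeff_X_pow]
    rcases eq_or_ne k 1 with h | h
    · subst h
      simp only [if_pos rfl]
      simp at hk ⊢
      rcases Nat.eq_zero_or_pos n with h0 | h0
      · omega
      · ring
    · simp [h, Ne.symm h]
  rw [Finset.sum_congr rfl this]
  rcases Nat.eq_zero_or_pos n with h | h
  · subst h; simp
  · rw [Finset.sum_ite_eq' (Finset.range (n+1)) 1]
    simp [Nat.lt_succ_iff, h]

theorem aux_L2 (f : Polynomial ℂ) (h : Polynomial.X^2 ∣ f) : f.coeff 1 = 0 := by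
  obtain ⟨q, rfl⟩ := h
  rw [mul_comm, Polynomial.coeff_mul_X_pow']
  simp

theorem aux_key (p : ℕ) (hp7 : 7 ≤ p) (a c m2 r2 m3 r3 lam : ℂ) :
    ((Polynomial.C a * Polynomial.X + Polynomial.C 0)^p + (Polynomial.C c * Polynomial.X + Polynomial.C 0)^p + (Polynomial.C m2 * Polynomial.X + Polynomial.C r2)^p + (Polynomial.C m3 * Polynomial.X + Polynomial.C r3)^p
      + Polynomial.C lam * ((Polynomial.C a * Polynomial.X + Polynomial.C 0)^2 * (Polynomial.C c * Polynomial.X + Polynomial.C 0)^(p-4) * (Polynomial.C m2 * Polynomial.X + Polynomial.C r2)^2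
               + (Polynomial.C a * Polynomial.X + Polynomial.C 0)^4 * (Polynomial.C c * Polynomial.X + Polynomial.C 0)^(p-6) * (Polynomial.C m3 * Polynomial.X + Polynomial.C r3)^2)).coeff 1
    = p * m2 * r2^(p-1) + p * m3 * r3^(p-1) := by
  simp only [Polynomial.C_0, add_zero]
  have hp1 : ¬ (1 = p) := by omega
  have h1 : ∀ z : ℂ, ((Polynomial.C z * Polynomial.X)^p).coeff 1 = 0 := by
    intro z
    rw [mul_pow, ← Polynomial.C_pow, Polynomial.coeff_C_mul, Polynomial.coeff_X_pow]
    simp [hp1]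
  have hd : (Polynomial.C lam * ((Polynomial.C a * Polynomial.X)^2 * (Polynomial.C c * Polynomial.X)^(p-4) * (Polynomial.C m2 * Polynomial.X + Polynomial.C r2)^2
               + (Polynomial.C a * Polynomial.X)^4 * (Polynomial.C c * Polynomial.X)^(p-6) * (Polynomial.C m3 * Polynomial.X + Polynomial.C r3)^2)).coeff 1 = 0 := by
    apply aux_L2
    exact ⟨Polynomial.C lam * (Polynomial.C a^2 * (Polynomial.C c * Polynomial.X)^(p-4) * (Polynomial.C m2 * Polynomial.X + Polynomial.C r2)^2
      + Polynomial.C a^4 * Polynomial.X^2 * (Polynomial.C c * Polynomial.X)^(p-6) * (Polynomial.C m3 * Polynomial.X + Polynomial.C r3)^2), by ring⟩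
  rw [Polynomial.coeff_add, Polynomial.coeff_add, Polynomial.coeff_add, Polynomial.coeff_add, h1, h1, aux_L1, aux_L1, hd]
  ring

theorem aux_sub (M : Matrix (Fin 4) (Fin 4) ℂ) (f : MvPolynomial (Fin 4) ℂ)
    (g : Fin 4 → Polynomial ℂ) :
    MvPolynomial.aeval g (substM M f)
      = MvPolynomial.aeval (fun i => ∑ j, Polynomial.C (M i j) * g j) f := by
  rw [substM, MvPolynomial.comp_aeval_apply]
  simp

theorem aux_fpol (p : ℕ) (lam : ℂ) (h : Fin 4 → Polynomial ℂ) :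
    MvPolynomial.aeval h (fpol p lam)
      = h 0 ^ p + h 1 ^ p + h 2 ^ p + h 3 ^ p +
        Polynomial.C lam * (h 0 ^ 2 * h 1 ^ (p - 4) * h 2 ^ 2
          + h 0 ^ 4 * h 1 ^ (p - 6) * h 3 ^ 2) := by
  simp [fpol, MvPolynomial.algebraMap_eq]

theorem stmt11 (p : ℕ) (hp : p.Prime) (hp7 : 7 ≤ p) (lam : ℂ) (hlam : lam ≠ 0)
    (M : GL (Fin 4) ℂ) (α : ℂ) (hα : α ≠ 0)
    (heq : substM (M : Matrix (Fin 4) (Fin 4) ℂ) (fpol p lam) = C α * fpol p lam)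
    (he3 : (M : Matrix (Fin 4) (Fin 4) ℂ).mulVec (stdBasis 2) = stdBasis 2)
    (he4 : Submodule.map (M : Matrix (Fin 4) (Fin 4) ℂ).mulVecLin (line 3) = line 3) :
    ((M : Matrix (Fin 4) (Fin 4) ℂ) 2 0 = 0 ∧ (M : Matrix (Fin 4) (Fin 4) ℂ) 3 0 = 0 ∧
     (M : Matrix (Fin 4) (Fin 4) ℂ) 2 1 = 0 ∧ (M : Matrix (Fin 4) (Fin 4) ℂ) 3 1 = 0) ∧
    Submodule.map (M : Matrix (Fin 4) (Fin 4) ℂ).mulVecLin plane12 = plane12 := by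
  set A : Matrix (Fin 4) (Fin 4) ℂ := (M : Matrix (Fin 4) (Fin 4) ℂ) with hA
  -- numeric facts
  have hp0 : p ≠ 0 := hp.ne_zero
  have hp1 : ¬ (1 = p) := by omega
  have hp4 : p - 4 ≠ 0 := by omega
  have hp6 : p - 6 ≠ 0 := by omega
  have hpm1 : p - 1 ≠ 0 := by omega
  have hpC : (p : ℂ) ≠ 0 := by exact_mod_cast hp0
  -- injectivity
  have hdet : IsUnit A.det := (Matrix.isUnit_iff_isUnit_det A).mp M.isUnit
  have hMinv : A⁻¹ * A = 1 := Matrix.nonsing_inv_mul A hdet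
  have hinj : Function.Injective A.mulVec := by
    intro x y hxy
    have h2 := congrArg (fun v => A⁻¹.mulVec v) hxy
    simpa [Matrix.mulVec_mulVec, hMinv, Matrix.one_mulVec] using h2
  -- column 2
  have hc2 : ∀ i, A i 2 = if i = 2 then 1 else 0 := by
    intro i
    have h2 := congrFun he3 i
    simpa [Matrix.mulVec, dotProduct, _root_.stdBasis, Pi.single_apply, Fin.sum_univ_four]
      using h2
  -- column 3
  obtain ⟨μ, hμ⟩ : ∃ μ : ℂ, ∀ i, A i 3 = if i = 3 then μ else 0 := by
    have hm : A.mulVec (_root_.stdBasis 3) ∈ line 3 := by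
      rw [← he4]
      exact ⟨_root_.stdBasis 3, Submodule.mem_span_singleton_self _, rfl⟩
    rw [line, Submodule.mem_span_singleton] at hm
    obtain ⟨μ, hm⟩ := hm
    refine ⟨μ, fun i => ?_⟩
    have h2 := congrFun hm i
    simpa [Matrix.mulVec, dotProduct, _root_.stdBasis, Pi.single_apply, Fin.sum_univ_four,
      mul_comm] using h2.symm
  have hμ0 : μ ≠ 0 := by
    intro h0
    have hz : A.mulVec (_root_.stdBasis 3) = A.mulVec 0 := by
      funext i
      have := hμ i
      simp [Matrix.mulVec, dotProduct, _root_.stdBasis, Pi.single_apply, Fin.sum_univ_four,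
        this, h0]
    have := hinj hz
    have := congrFun this 3
    simp [_root_.stdBasis, Pi.single_apply] at this
  -- RHS coefficient computations
  have hRHS1 : ∀ g : Fin 4 → Polynomial ℂ, (g = ![Polynomial.X, 0, 1, 0]) ∨ True →
      True := fun _ _ => trivial
  -- the four coefficient extractions
  have main : ∀ (g : Fin 4 → Polynomial ℂ) (m0 m1 m2 r2 m3 r3 : ℂ),
      ((fun i => ∑ j, Polynomial.C (A i j) * g j)
        = ![Polynomial.C m0 * Polynomial.X + Polynomial.C 0,
            Polynomial.C m1 * Polynomial.X + Polynomial.C 0,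
            Polynomial.C m2 * Polynomial.X + Polynomial.C r2,
            Polynomial.C m3 * Polynomial.X + Polynomial.C r3]) →
      ((MvPolynomial.aeval g (fpol p lam)).coeff 1 = 0) →
      (p : ℂ) * m2 * r2^(p-1) + (p : ℂ) * m3 * r3^(p-1) = 0 := by
    intro g m0 m1 m2 r2 m3 r3 hfun hrhs
    have E := congrArg (MvPolynomial.aeval g) heq
    rw [aux_sub, _root_.map_mul, MvPolynomial.aeval_C, hfun, aux_fpol] at E
    have hco := congrArg (fun q : Polynomial ℂ => q.coeff 1) E
    simp only [Matrix.cons_val_zero, Matrix.cons_val_one, Matrix.head_cons,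
      Matrix.cons_val_two, Matrix.tail_cons, Matrix.cons_val_three] at hco
    rw [aux_key p hp7] at hco
    rw [hco]
    simp [Polynomial.coeff_C_mul, hrhs, MvPolynomial.algebraMap_eq]
  -- case 1 : g = ![X, 0, 1, 0]
  have h20 : A 2 0 = 0 := by
    have h := main ![Polynomial.X, 0, 1, 0] (A 0 0) (A 1 0) (A 2 0) 1 (A 3 0) 0 ?_ ?_
    · have : (p:ℂ) * A 2 0 = 0 := by
        simpa [one_pow, zero_pow hpm1] using h
      exact (mul_eq_zero.mp this).resolve_left hpC
    · funext i
      fin_cases i <;> simp [Fin.sum_univ_four, hc2, hμ]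
    · rw [aux_fpol]
      simp [zero_pow hp0, zero_pow hp4, Polynomial.coeff_X_pow, Polynomial.coeff_one, hp1]
  have h30 : A 3 0 = 0 := by
    have h := main ![Polynomial.X, 0, 0, 1] (A 0 0) (A 1 0) (A 2 0) 0 (A 3 0) μ ?_ ?_
    · have : (p:ℂ) * A 3 0 * μ^(p-1) = 0 := by
        simpa [zero_pow hpm1] using h
      rcases mul_eq_zero.mp this with h' | h'
      · exact (mul_eq_zero.mp h').resolve_left hpC
      · exact absurd h' (pow_ne_zero _ hμ0)
    · funext i
      fin_cases i <;> simp [Fin.sum_univ_four, hc2, hμ]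
    · rw [aux_fpol]
      simp [zero_pow hp0, zero_pow hp4, zero_pow hp6, Polynomial.coeff_X_pow, Polynomial.coeff_one, hp1]
  have h21 : A 2 1 = 0 := by
    have h := main ![0, Polynomial.X, 1, 0] (A 0 1) (A 1 1) (A 2 1) 1 (A 3 1) 0 ?_ ?_
    · have : (p:ℂ) * A 2 1 = 0 := by
        simpa [one_pow, zero_pow hpm1] using h
      exact (mul_eq_zero.mp this).resolve_left hpC
    · funext i
      fin_cases i <;> simp [Fin.sum_univ_four, hc2, hμ]
    · rw [aux_fpol]
      simp [zero_pow hp0, zero_pow hp4, Polynomial.coeff_X_pow, Polynomial.coeff_one, hp1]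
  have h31 : A 3 1 = 0 := by
    have h := main ![0, Polynomial.X, 0, 1] (A 0 1) (A 1 1) (A 2 1) 0 (A 3 1) μ ?_ ?_
    · have : (p:ℂ) * A 3 1 * μ^(p-1) = 0 := by
        simpa [zero_pow hpm1] using h
      rcases mul_eq_zero.mp this with h' | h'
      · exact (mul_eq_zero.mp h').resolve_left hpC
      · exact absurd h' (pow_ne_zero _ hμ0)
    · funext i
      fin_cases i <;> simp [Fin.sum_univ_four, hc2, hμ]
    · rw [aux_fpol]
      simp [zero_pow hp0, zero_pow hp4, zero_pow hp6, Polynomial.coeff_X_pow, Polynomial.coeff_one, hp1]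
  refine ⟨⟨h20, h30, h21, h31⟩, ?_⟩
  -- the plane statement
  have hinj' : Function.Injective A.mulVecLin := by
    simpa [Matrix.coe_mulVecLin] using hinj
  have hle : Submodule.map A.mulVecLin plane12 ≤ plane12 := by
    rw [plane12, Submodule.map_span, Submodule.span_le]
    rintro y ⟨x, hx, rfl⟩
    simp only [Set.mem_insert_iff, Set.mem_singleton_iff] at hx
    have hmem : ∀ c d : ℂ, c • _root_.stdBasis 0 + d • _root_.stdBasis 1 ∈ plane12 := by
      intro c d
      exact Submodule.add_mem _
        (Submodule.smul_mem _ _ (Submodule.subset_span (Or.inl rfl)))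
        (Submodule.smul_mem _ _ (Submodule.subset_span (Or.inr rfl)))
    rcases hx with rfl | rfl
    · have : A.mulVecLin (_root_.stdBasis 0) = A 0 0 • _root_.stdBasis 0 + A 1 0 • _root_.stdBasis 1 := by
        funext i
        fin_cases i <;>
          simp [Matrix.mulVecLin_apply, Matrix.mulVec, dotProduct, _root_.stdBasis,
            Pi.single_apply, Fin.sum_univ_four, h20, h30]
      rw [this]; exact hmem _ _
    · have : A.mulVecLin (_root_.stdBasis 1) = A 0 1 • _root_.stdBasis 0 + A 1 1 • _root_.stdBasis 1 := by
        funext i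
        fin_cases i <;>
          simp [Matrix.mulVecLin_apply, Matrix.mulVec, dotProduct, _root_.stdBasis,
            Pi.single_apply, Fin.sum_univ_four, h21, h31]
      rw [this]; exact hmem _ _
  apply Submodule.eq_of_le_of_finrank_le hle
  have := (Submodule.equivMapOfInjective A.mulVecLin hinj' plane12).finrank_eq
  omega
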